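/- Within a single u-segment of an execution of Algorithm RSP, the sequence of rules executed by a non-root process u is a word of the regular language (R_I + ε)(R_R + ε) R_C* (R_EB + ε)(R_EF + ε). -/

import Mathlib

open Classical

inductive RStatus : Type
  | I | C | EB | EF
deriving DecidableEq

inductive RRule : Type
  | RC | REB | REF | RI | RR
deriving DecidableEq

/-- A network: a finite simple graph with a distinguished root and
strictly positive symmetric edge weights. -/
structure Network (V : Type) [Fintype V] [DecidableEq V] where
  G : SimpleGraph V
  r : V
  w : V → V → ℝ
  w_symm : ∀ u v : V, w u v = w v u
  w_pos : ∀ u v : V, G.Adj u v → 0 < w u v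

/-- A configuration: each process has a status, a parent pointer and a distance value. -/
structure Config (V : Type) where
  st : V → RStatus
  par : V → V
  d : V → ℝ

variable {V : Type} [Fintype V] [DecidableEq V]

/-- The root's variables are constants: status C and distance 0. -/
def RootConst (N : Network V) (γ : Config V) : Prop :=
  γ.st N.r = RStatus.C ∧ γ.d N.r = 0

/-- v ∈ children(u). -/
def childOf (N : Network V) (γ : Config V) (u v : V) : Prop :=
  N.G.Adj u v ∧ γ.st u ≠ RStatus.I ∧ γ.st v ≠ RStatus.I ∧ γ.par v = u ∧
    γ.d v ≥ γ.d u + N.w v u ∧ (γ.st v = γ.st u ∨ γ.st u = RStatus.EB)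

/-- u is an abnormal root. -/
def abRoot (N : Network V) (γ : Config V) (u : V) : Prop :=
  u ≠ N.r ∧ γ.st u ≠ RStatus.I ∧
    (¬ N.G.Adj u (γ.par u) ∨ γ.st (γ.par u) = RStatus.I ∨
     γ.d u < γ.d (γ.par u) + N.w u (γ.par u) ∨
     (γ.st u ≠ γ.st (γ.par u) ∧ γ.st (γ.par u) ≠ RStatus.EB))

def PReset (N : Network V) (γ : Config V) (u : V) : Prop :=
  γ.st u = RStatus.EF ∧ abRoot N γ u

def PCorrection (N : Network V) (γ : Config V) (u : V) : Prop :=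
  ∃ v : V, N.G.Adj u v ∧ γ.st v = RStatus.C ∧ γ.d v + N.w u v < γ.d u

def guardRC (N : Network V) (γ : Config V) (u : V) : Prop :=
  u ≠ N.r ∧ γ.st u = RStatus.C ∧ PCorrection N γ u

def guardREB (N : Network V) (γ : Config V) (u : V) : Prop :=
  u ≠ N.r ∧ γ.st u = RStatus.C ∧ ¬ PCorrection N γ u ∧
    (abRoot N γ u ∨ γ.st (γ.par u) = RStatus.EB)

def guardREF (N : Network V) (γ : Config V) (u : V) : Prop :=
  u ≠ N.r ∧ γ.st u = RStatus.EB ∧ ∀ v : V, childOf N γ u v → γ.st v = RStatus.EF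

def guardRI (N : Network V) (γ : Config V) (u : V) : Prop :=
  u ≠ N.r ∧ PReset N γ u ∧ ∀ v : V, N.G.Adj u v → γ.st v ≠ RStatus.C

def guardRR (N : Network V) (γ : Config V) (u : V) : Prop :=
  u ≠ N.r ∧ (PReset N γ u ∨ γ.st u = RStatus.I) ∧
    ∃ v : V, N.G.Adj u v ∧ γ.st v = RStatus.C

/-- The effect of the macro computePath at u in the step γ → γ'. -/
def ComputePath (N : Network V) (γ γ' : Config V) (u : V) : Prop :=
  N.G.Adj u (γ'.par u) ∧ γ.st (γ'.par u) = RStatus.C ∧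
  (∀ v : V, N.G.Adj u v → γ.st v = RStatus.C →
      γ.d (γ'.par u) + N.w u (γ'.par u) ≤ γ.d v + N.w u v) ∧
  γ'.d u = γ.d (γ'.par u) + N.w u (γ'.par u) ∧ γ'.st u = RStatus.C

/-- u executes the given rule during the step γ → γ'. -/
def ExecRule (N : Network V) (γ γ' : Config V) (u : V) : RRule → Prop
  | RRule.RC => guardRC N γ u ∧ ComputePath N γ γ' u
  | RRule.REB => guardREB N γ u ∧ γ'.st u = RStatus.EB ∧ γ'.par u = γ.par u ∧ γ'.d u = γ.d u
  | RRule.REF => guardREF N γ u ∧ γ'.st u = RStatus.EF ∧ γ'.par u = γ.par u ∧ γ'.d u = γ.d u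
  | RRule.RI => guardRI N γ u ∧ γ'.st u = RStatus.I ∧ γ'.par u = γ.par u ∧ γ'.d u = γ.d u
  | RRule.RR => guardRR N γ u ∧ ComputePath N γ γ' u

def EnabledAt (N : Network V) (γ : Config V) (u : V) : Prop :=
  guardRC N γ u ∨ guardREB N γ u ∨ guardREF N γ u ∨ guardRI N γ u ∨ guardRR N γ u

/-- A step of the distributed (unfair) daemon: a nonempty set of enabled processes
each atomically executes one of its enabled rules; other processes are unchanged. -/
def Step (N : Network V) (γ γ' : Config V) : Prop :=
  ∃ S : Set V, S.Nonempty ∧ (∀ u ∈ S, ∃ ρ : RRule, ExecRule N γ γ' u ρ) ∧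
    ∀ u : V, u ∉ S → γ'.st u = γ.st u ∧ γ'.par u = γ.par u ∧ γ'.d u = γ.d u

def Terminal (N : Network V) (γ : Config V) : Prop :=
  ∀ u : V, ¬ EnabledAt N γ u

/-- Weight of a walk. -/
noncomputable def walkWeight (N : Network V) {u v : V} (p : N.G.Walk u v) : ℝ :=
  (p.darts.map (fun e => N.w e.toProd.1 e.toProd.2)).sum

/-- x is the weighted distance from u to v in the graph. -/
def IsWDistBetween (N : Network V) (u v : V) (x : ℝ) : Prop :=
  (∃ p : N.G.Walk u v, walkWeight N p = x) ∧ ∀ p : N.G.Walk u v, x ≤ walkWeight N p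

/-- x is the weighted distance d(u,r). -/
def IsWDist (N : Network V) (u : V) (x : ℝ) : Prop :=
  IsWDistBetween N u N.r x

/-- k is the hop-distance between u and v: the minimum number of edges
of a minimum-weight path from u to v. -/
def IsHopDist (N : Network V) (u v : V) (k : ℕ) : Prop :=
  (∃ p : N.G.Walk u v, p.length = k ∧ ∀ q : N.G.Walk u v, walkWeight N p ≤ walkWeight N q) ∧
  (∀ p : N.G.Walk u v, (∀ q : N.G.Walk u v, walkWeight N p ≤ walkWeight N q) → k ≤ p.length)

/-- Legitimate state of a process. -/
def LegitState (N : Network V) (γ : Config V) (u : V) : Prop :=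
  u = N.r ∨
  (N.G.Reachable u N.r ∧ γ.st u = RStatus.C ∧ IsWDist N u (γ.d u) ∧
     N.G.Adj u (γ.par u) ∧ γ.d u = γ.d (γ.par u) + N.w u (γ.par u)) ∨
  (¬ N.G.Reachable u N.r ∧ γ.st u = RStatus.I)

def Legitimate (N : Network V) (γ : Config V) : Prop :=
  ∀ u : V, LegitState N γ u

/-- An execution: an infinite sequence of configurations (stuttering once terminal),
all respecting the root constants, consecutive ones related by steps. -/
def IsExec (N : Network V) (e : ℕ → Config V) : Prop :=
  (∀ i : ℕ, RootConst N (e i)) ∧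
  ∀ i : ℕ, Step N (e i) (e (i+1)) ∨ (Terminal N (e i) ∧ e (i+1) = e i)

/-- u executes some rule at step j of execution e. -/
def ExecAt (N : Network V) (e : ℕ → Config V) (j : ℕ) (u : V) : Prop :=
  ∃ ρ : RRule, ExecRule N (e j) (e (j+1)) u ρ

/-- u executes computePath (rule R_C or R_R) at step j. -/
def CPExec (N : Network V) (e : ℕ → Config V) (j : ℕ) (u : V) : Prop :=
  ExecRule N (e j) (e (j+1)) u RRule.RC ∨ ExecRule N (e j) (e (j+1)) u RRule.RR

def AliveAbRoot (N : Network V) (γ : Config V) (u : V) : Prop :=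
  abRoot N γ u ∧ γ.st u ≠ RStatus.EF

/-- Step j is a u-segment break: some non-root process of V_u ceases to be
an alive abnormal root during step j. -/
def SegBreak (N : Network V) (e : ℕ → Config V) (u : V) (j : ℕ) : Prop :=
  ∃ v : V, v ≠ N.r ∧ N.G.Reachable v u ∧
    AliveAbRoot N (e j) v ∧ ¬ AliveAbRoot N (e (j+1)) v

/-- n_maxCC: the maximum number of non-root processes in a connected component. -/
noncomputable def nmaxCC (N : Network V) : ℕ :=
  sSup {k : ℕ | ∃ v : V, k = {x : V | x ≠ N.r ∧ N.G.Reachable x v}.ncard}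

/-- The interval of steps [s, t) is a u-segment of the execution e
(t = ⊤ encodes a final, unbroken segment). -/
def IsSegment (N : Network V) (e : ℕ → Config V) (u : V) (s : ℕ) (t : ℕ∞) : Prop :=
  (s : ℕ∞) < t ∧ (s = 0 ∨ SegBreak N e u (s-1)) ∧
  (∀ j : ℕ, s ≤ j → ((j : ℕ∞) + 1 < t) → ¬ SegBreak N e u j) ∧
  (∀ m : ℕ, t = (m : ℕ∞) → SegBreak N e u (m-1))

/-- A causal chain of k+1 actions a_1,…,a_{k+1} in the window [s,t):
a_{i} occurs at time τ i, is a computePath execution by process p (i+1)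
setting its parent to p i; a_1 occurs no later than any action of p 0,
and each a_{i+1} occurs after a_i but no later than the next action of a_i's executor. -/
structure IsCausalChain (N : Network V) (e : ℕ → Config V) (s : ℕ) (t : ℕ∞)
    (k : ℕ) (τ : Fin (k+1) → ℕ) (p : Fin (k+2) → V) : Prop where
  mono : StrictMono τ
  lb : ∀ i : Fin (k+1), s ≤ τ i
  ub : ∀ i : Fin (k+1), (τ i : ℕ∞) < t
  cp : ∀ i : Fin (k+1), CPExec N e (τ i) (p i.succ) ∧ (e (τ i + 1)).par (p i.succ) = p i.castSucc
  root_first : ∀ j : ℕ, s ≤ j → j < τ 0 → ¬ ExecAt N e j (p 0)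
  between : ∀ i : Fin k, ∀ j : ℕ, τ i.castSucc < j → j < τ i.succ →
      ¬ ExecAt N e j (p i.castSucc.succ)

/-- A maximal causal chain: a causal chain that cannot be extended by a further action. -/
def IsMaxCausalChain (N : Network V) (e : ℕ → Config V) (s : ℕ) (t : ℕ∞)
    (k : ℕ) (τ : Fin (k+1) → ℕ) (p : Fin (k+2) → V) : Prop :=
  IsCausalChain N e s t k τ p ∧
  ¬ ∃ (j : ℕ) (v : V), τ (Fin.last k) < j ∧ (j : ℕ∞) < t ∧ CPExec N e j v ∧
      (e (j+1)).par v = p (Fin.last (k+1)) ∧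
      ∀ j' : ℕ, τ (Fin.last k) < j' → j' < j → ¬ ExecAt N e j' (p (Fin.last (k+1)))

/-- S_{seg,v}: the set of distance values produced by actions of maximal
causal chains rooted at v of the segment [s,t). -/
def SSeg (N : Network V) (e : ℕ → Config V) (s : ℕ) (t : ℕ∞) (v : V) : Set ℝ :=
  {x : ℝ | ∃ (k : ℕ) (τ : Fin (k+1) → ℕ) (p : Fin (k+2) → V),
      IsMaxCausalChain N e s t k τ p ∧ p 0 = v ∧
      ∃ i : Fin (k+1), x = (e (τ i + 1)).d (p i.succ)}

def Neutralized (N : Network V) (e : ℕ → Config V) (j : ℕ) (u : V) : Prop :=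
  EnabledAt N (e j) u ∧ ¬ EnabledAt N (e (j+1)) u

/-- Every process enabled at time s executes or is neutralized before time t. -/
def CompletesRound (N : Network V) (e : ℕ → Config V) (s t : ℕ) : Prop :=
  s ≤ t ∧ ∀ u : V, EnabledAt N (e s) u →
    ∃ j : ℕ, s ≤ j ∧ j < t ∧ (ExecAt N e j u ∨ Neutralized N e j u)

/-- roundEnd e k: the time at which the k-th round ends (the beginning of round k+1). -/
noncomputable def roundEnd (N : Network V) (e : ℕ → Config V) : ℕ → ℕ
  | 0 => 0
  | k+1 => sInf {t : ℕ | CompletesRound N e (roundEnd N e k) t}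

/-- b 0, b 1, …, b k is a branch: b 0 is the root r or an abnormal root,
and each b (i+1) is a child of b i; b i is at depth i+1. -/
def IsBranch (N : Network V) (γ : Config V) (k : ℕ) (b : Fin (k+1) → V) : Prop :=
  (b 0 = N.r ∨ abRoot N γ (b 0)) ∧ ∀ i : Fin k, childOf N γ (b i.castSucc) (b i.succ)

/-- Membership in the regular language (R_I + ε)(R_R + ε)R_C*(R_EB + ε)(R_EF + ε). -/
def InRSPLang (l : List RRule) : Prop :=
  ∃ a b c d f : List RRule, l = a ++ b ++ c ++ d ++ f ∧
    (a = [] ∨ a = [RRule.RI]) ∧ (b = [] ∨ b = [RRule.RR]) ∧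
    (∀ x ∈ c, x = RRule.RC) ∧ (d = [] ∨ d = [RRule.REB]) ∧ (f = [] ∨ f = [RRule.REF])

/-! ### Auxiliary machinery for Statement 8 -/

/-- Level of a rule in the regular language order. -/
def rlev : RRule → ℕ
  | RRule.RI => 0
  | RRule.RR => 1
  | RRule.RC => 2
  | RRule.REB => 3
  | RRule.REF => 4

/-- Relation that must hold between two successive rules executed by a process
within one segment. -/
def rrel (a b : RRule) : Prop := rlev a < rlev b ∨ (a = RRule.RC ∧ b = RRule.RC)

instance rrelDec : ∀ a b, Decidable (rrel a b) := fun a b => by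
  unfold rrel; infer_instance

lemma rrel_trans {a b c : RRule} (h1 : rrel a b) (h2 : rrel b c) : rrel a c := by
  rcases h1 with h1 | ⟨ha, hb⟩
  · rcases h2 with h2 | ⟨hb, hc⟩
    · exact Or.inl (h1.trans h2)
    · subst hb; subst hc; exact Or.inl h1
  · subst ha; subst hb
    rcases h2 with h2 | ⟨_, hc⟩
    · exact Or.inl h2
    · exact Or.inr ⟨rfl, hc⟩

/-- Status of a process just after executing a given rule. -/
def postSt : RRule → RStatus
  | RRule.RC => RStatus.C
  | RRule.REB => RStatus.EB
  | RRule.REF => RStatus.EF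
  | RRule.RI => RStatus.I
  | RRule.RR => RStatus.C

lemma exec_post_st {N : Network V} {γ γ' : Config V} {x : V} {r : RRule}
    (h : ExecRule N γ γ' x r) : γ'.st x = postSt r := by
  cases r
  · exact h.2.2.2.2.2
  · exact h.2.1
  · exact h.2.1
  · exact h.2.1
  · exact h.2.2.2.2.2

/-- The guard of each rule constrains the current status of the process. -/
lemma pre_st_cases {N : Network V} {γ γ' : Config V} {x : V} {r : RRule}
    (h : ExecRule N γ γ' x r) :
    (γ.st x = RStatus.C ∧ (r = RRule.RC ∨ r = RRule.REB)) ∨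
    (γ.st x = RStatus.EB ∧ r = RRule.REF) ∨
    (γ.st x = RStatus.EF ∧ (r = RRule.RI ∨ r = RRule.RR)) ∨
    (γ.st x = RStatus.I ∧ r = RRule.RR) := by
  cases r
  · exact Or.inl ⟨h.1.2.1, Or.inl rfl⟩
  · exact Or.inl ⟨h.1.2.1, Or.inr rfl⟩
  · exact Or.inr (Or.inl ⟨h.1.2.1, rfl⟩)
  · exact Or.inr (Or.inr (Or.inl ⟨h.1.2.1.1, Or.inl rfl⟩))
  · rcases h.1.2.1 with hp | hI
    · exact Or.inr (Or.inr (Or.inl ⟨hp.1, Or.inr rfl⟩))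
    · exact Or.inr (Or.inr (Or.inr ⟨hI, rfl⟩))

/-- A process that does not execute on an interval keeps its variables. -/
lemma vars_const (N : Network V) (e : ℕ → Config V) (he : IsExec N e) (x : V) :
    ∀ b a : ℕ, a ≤ b → (∀ n, a ≤ n → n < b → ¬ ExecAt N e n x) →
      (e b).st x = (e a).st x ∧ (e b).par x = (e a).par x ∧ (e b).d x = (e a).d x := by
  intro b
  induction b with
  | zero =>
    intro a ha _
    have : a = 0 := Nat.le_zero.mp ha
    subst this; exact ⟨rfl, rfl, rfl⟩
  | succ b ihb =>
    intro a ha hno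
    rcases Nat.lt_or_ge a (b+1) with hlt | hge
    · have hab : a ≤ b := by omega
      have ih := ihb a hab (fun n h1 h2 => hno n h1 (by omega))
      have hstep : (e (b+1)).st x = (e b).st x ∧ (e (b+1)).par x = (e b).par x ∧
          (e (b+1)).d x = (e b).d x := by
        rcases he.2 b with ⟨S, _, hSex, hSfix⟩ | ⟨_, heq⟩
        · by_cases hxS : x ∈ S
          · exact absurd (hSex x hxS) (hno b hab (by omega))
          · exact hSfix x hxS
        · rw [heq]; exact ⟨rfl, rfl, rfl⟩
      exact ⟨hstep.1.trans ih.1, hstep.2.1.trans ih.2.1, hstep.2.2.trans ih.2.2⟩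
    · have : a = b+1 := by omega
      subst this; exact ⟨rfl, rfl, rfl⟩

/-- KEY: within a u-segment, once a process of u's component executes R_EF,
it executes no further rule in that segment. -/
lemma no_exec_after_REF (N : Network V) (e : ℕ → Config V) (he : IsExec N e)
    (u : V) (s : ℕ) (t : ℕ∞) (hseg : IsSegment N e u s t) :
    ∀ D : ℕ, ∀ x : V, ∀ j j' : ℕ, j' - j ≤ D → N.G.Reachable x u → s ≤ j → j < j' →
      (j' : ℕ∞) < t → ExecRule N (e j) (e (j+1)) x RRule.REF → ExecAt N e j' x → False := by
  intro D
  induction D with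
  | zero => intro x j j' hD _ _ hjj _ _ _; omega
  | succ D ih =>
    intro x j j' hD hreach hsj hjj hjt href hexj'
    obtain ⟨⟨hxr, hstEB, hchild⟩, hst', hpar', hd'⟩ := href
    by_cases hab : abRoot N (e j) x
    · -- Case A: x is an alive abnormal root at j that dies during step j: segment break.
      have hbreak : SegBreak N e u j :=
        ⟨x, hxr, hreach, ⟨hab, by rw [hstEB]; decide⟩, fun h => h.2 hst'⟩
      have hjt1 : (j : ℕ∞) + 1 < t := by
        have h1 : ((j+1 : ℕ) : ℕ∞) ≤ ((j' : ℕ) : ℕ∞) := by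
          exact_mod_cast Nat.succ_le_of_lt hjj
        have h2 : (j : ℕ∞) + 1 = ((j+1 : ℕ) : ℕ∞) := by push_cast; ring
        rw [h2]; exact lt_of_le_of_lt h1 hjt
      exact hseg.2.2.1 j hsj hjt1 hbreak
    · -- Case B: the parent p of x has status EB at time j.
      set p := (e j).par x with hp
      have hAdj : N.G.Adj x p := by
        by_contra hA
        exact hab ⟨hxr, by rw [hstEB]; decide, Or.inl hA⟩
      have hpI : (e j).st p ≠ RStatus.I := by
        intro hI
        exact hab ⟨hxr, by rw [hstEB]; decide, Or.inr (Or.inl hI)⟩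
      have hdge : ¬ ((e j).d x < (e j).d p + N.w x p) := by
        intro hlt
        exact hab ⟨hxr, by rw [hstEB]; decide, Or.inr (Or.inr (Or.inl hlt))⟩
      have hpEB : (e j).st p = RStatus.EB := by
        by_contra hne
        exact hab ⟨hxr, by rw [hstEB]; decide,
          Or.inr (Or.inr (Or.inr ⟨by rw [hstEB]; exact fun h => hne h.symm, hne⟩))⟩
      -- j2 : first execution of x after j
      have hex : ∃ n, j < n ∧ ExecAt N e n x := ⟨j', hjj, hexj'⟩
      set j2 := Nat.find hex with hj2def
      obtain ⟨hj2gt, hj2ex⟩ := Nat.find_spec hex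
      rw [← hj2def] at hj2gt hj2ex
      have hj2le : j2 ≤ j' := Nat.find_le ⟨hjj, hexj'⟩
      have hconst := vars_const N e he x j2 (j+1) hj2gt
        (fun n h1 h2 hx => Nat.find_min hex h2 ⟨by omega, hx⟩)
      have hstj2 : (e j2).st x = RStatus.EF := by rw [hconst.1, hst']
      have hparj2 : (e j2).par x = p := by rw [hconst.2.1, hpar']
      have hdj2 : (e j2).d x = (e j).d x := by rw [hconst.2.2, hd']
      -- x must be an abnormal root at j2
      have habj2 : abRoot N (e j2) x := by
        obtain ⟨r2, hr2⟩ := hj2ex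
        rcases pre_st_cases hr2 with ⟨h1, _⟩ | ⟨h1, _⟩ | ⟨_, rfl | rfl⟩ | ⟨h1, _⟩
        · exact absurd h1 (by rw [hstj2]; decide)
        · exact absurd h1 (by rw [hstj2]; decide)
        · exact hr2.1.2.1.2
        · rcases hr2.1.2.1 with hpr | hI
          · exact hpr.2
          · exact absurd hI (by rw [hstj2]; decide)
        · exact absurd h1 (by rw [hstj2]; decide)
      obtain ⟨_, _, hcases⟩ := habj2
      rw [hparj2] at hcases
      -- p's variables change between j and j2
      have hpchange : (e j2).st p ≠ (e j).st p ∨ (e j2).d p ≠ (e j).d p := by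
        rcases hcases with hA | hI | hlt | ⟨hne, hnEB⟩
        · exact absurd hAdj hA
        · left; rw [hI, hpEB]; decide
        · right; intro hdeq; rw [hdj2, hdeq] at hlt; exact hdge hlt
        · left; rw [hpEB]; exact hnEB
      -- hence p executes somewhere in [j, j2)
      have hpex0 : ∃ n, j ≤ n ∧ n < j2 ∧ ExecAt N e n p := by
        by_contra hno
        push_neg at hno
        have hc := vars_const N e he p j2 j (by omega) (fun n h1 h2 => hno n h1 h2)
        rcases hpchange with h | h
        · exact h hc.1
        · exact h hc.2.2
      obtain ⟨n0, hn0j, hn0lt, hn0ex⟩ := hpex0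
      have hpex' : ∃ n, j ≤ n ∧ ExecAt N e n p := ⟨n0, hn0j, hn0ex⟩
      set k := Nat.find hpex' with hkdef
      obtain ⟨hkj, hkex⟩ := Nat.find_spec hpex'
      rw [← hkdef] at hkj hkex
      have hklt : k < j2 := lt_of_le_of_lt (Nat.find_le ⟨hn0j, hn0ex⟩) hn0lt
      have hpconstk := vars_const N e he p k j hkj
        (fun n h1 h2 hx => Nat.find_min hpex' h2 ⟨h1, hx⟩)
      have hstpk : (e k).st p = RStatus.EB := by rw [hpconstk.1, hpEB]
      -- the rule executed by p at k is REF
      obtain ⟨rk, hrk⟩ := hkex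
      have hrkREF : rk = RRule.REF := by
        rcases pre_st_cases hrk with ⟨h1, _⟩ | ⟨_, h2⟩ | ⟨h1, _⟩ | ⟨h1, _⟩
        · exact absurd h1 (by rw [hstpk]; decide)
        · exact h2
        · exact absurd h1 (by rw [hstpk]; decide)
        · exact absurd h1 (by rw [hstpk]; decide)
      subst hrkREF
      -- k ≠ j since x is a non-EF child of p at j
      have hkgt : j < k := by
        rcases Nat.lt_or_ge j k with h | h
        · exact h
        · exfalso
          have hkeqj : k = j := by omega
          have hch : childOf N (e j) p x :=
            ⟨hAdj.symm, by rw [hpEB]; decide, by rw [hstEB]; decide, hp.symm,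
              not_lt.mp hdge, Or.inr hpEB⟩
          have hEF := hrk.1.2.2 x (by rw [hkeqj]; exact hch)
          rw [hkeqj, hstEB] at hEF
          exact absurd hEF (by decide)
      -- p's variables just after k
      have hd_pk : (e (k+1)).d p = (e j).d p := by rw [hrk.2.2.2, hpconstk.2.2]
      have hst_pk1 : (e (k+1)).st p = RStatus.EF := hrk.2.1
      -- p executes again in (k, j2)
      have hk'ex : ∃ n, k+1 ≤ n ∧ n < j2 ∧ ExecAt N e n p := by
        by_contra hno
        push_neg at hno
        have hc := vars_const N e he p j2 (k+1) (by omega) (fun n h1 h2 => hno n h1 h2)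
        rcases hcases with hA | hI | hlt | ⟨hne, hnEB⟩
        · exact hA hAdj
        · rw [hc.1, hst_pk1] at hI; cases hI
        · rw [hdj2, hc.2.2, hd_pk] at hlt; exact hdge hlt
        · rw [hstj2, hc.1, hst_pk1] at hne; exact hne rfl
      obtain ⟨k', hk'1, hk'2, hk'ex⟩ := hk'ex
      have hreach' : N.G.Reachable p u := (hAdj.symm.reachable).trans hreach
      have hk't : (k' : ℕ∞) < t := by
        have h1 : ((k' : ℕ) : ℕ∞) < ((j' : ℕ) : ℕ∞) := by
          exact_mod_cast (show k' < j' by omega)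
        exact lt_trans h1 hjt
      exact ih p k k' (by omega) hreach' (le_trans hsj (by omega)) (by omega) hk't hrk hk'ex

/-- Two successive executions by u within a segment satisfy `rrel`. -/
lemma exec_rrel (N : Network V) (e : ℕ → Config V) (he : IsExec N e)
    (u : V) (s : ℕ) (t : ℕ∞) (hseg : IsSegment N e u s t) :
    ∀ D : ℕ, ∀ j j' : ℕ, ∀ r r' : RRule, j' - j ≤ D → s ≤ j → j < j' → (j' : ℕ∞) < t →
      ExecRule N (e j) (e (j+1)) u r → ExecRule N (e j') (e (j'+1)) u r' → rrel r r' := by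
  intro D
  induction D with
  | zero => intro j j' r r' h1 _ h3 _ _ _; omega
  | succ D ih =>
    intro j j' r r' hD hsj hjj hjt hr hr'
    -- k : first execution of u after j
    have hex : ∃ n, j < n ∧ n ≤ j' ∧ ExecAt N e n u := ⟨j', hjj, le_refl _, r', hr'⟩
    set k := Nat.find hex with hkdef
    obtain ⟨hkj, hkj', hkex⟩ := Nat.find_spec hex
    rw [← hkdef] at hkj hkj' hkex
    have hkt : (k : ℕ∞) < t := by
      have h1 : ((k : ℕ) : ℕ∞) ≤ ((j' : ℕ) : ℕ∞) := by exact_mod_cast hkj'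
      exact lt_of_le_of_lt h1 hjt
    by_cases hREF : r = RRule.REF
    · subst hREF
      exact absurd hkex fun hk =>
        no_exec_after_REF N e he u s t hseg (k - j) u j k le_rfl (SimpleGraph.Reachable.refl u)
          hsj hkj hkt hr hk
    · have hconst := vars_const N e he u k (j+1) hkj
        (fun n h1 h2 hx => Nat.find_min hex h2 ⟨by omega, by omega, hx⟩)
      have hstk : (e k).st u = postSt r := by rw [hconst.1, exec_post_st hr]
      rcases Nat.lt_or_ge k j' with hkltj' | hge
      · obtain ⟨rk, hrk⟩ := hkex
        have h1 : rrel r rk := by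
          have hpre := pre_st_cases hrk
          rw [hstk] at hpre
          revert hpre hREF
          cases r <;> cases rk <;> decide
        have h2 : rrel rk r' := ih k j' rk r' (by omega) (by omega) hkltj' hjt hrk hr'
        exact rrel_trans h1 h2
      · have hkeq : k = j' := le_antisymm hkj' hge
        have hpre := pre_st_cases hr'
        rw [← hkeq, hstk] at hpre
        revert hpre hREF
        cases r <;> cases r' <;> decide

/-- A `rrel`-chain belongs to the regular language. -/
lemma lang_of_chain : ∀ l : List RRule, List.Chain' rrel l → InRSPLang l := by
  intro l
  induction l with
  | nil =>
    intro _
    exact ⟨[], [], [], [], [], by simp, Or.inl rfl, Or.inl rfl, by simp, Or.inl rfl, Or.inl rfl⟩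
  | cons x l ih =>
    intro hch
    obtain ⟨hhead, hch'⟩ := List.isChain_cons.mp hch
    obtain ⟨a, b, c, d, f, hl, ha, hb, hc, hd, hf⟩ := ih hch'
    have hcRC : ∀ y c', c = y :: c' → y = RRule.RC := fun y c' h => hc y (by rw [h]; simp)
    cases x with
    | RI =>
      rcases ha with rfl | rfl
      · exact ⟨[RRule.RI], b, c, d, f, by simp [hl], Or.inr rfl, hb, hc, hd, hf⟩
      · exact absurd (hhead RRule.RI (by simp [hl])) (by decide)
    | RR =>
      rcases ha with rfl | rfl
      · rcases hb with rfl | rfl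
        · exact ⟨[], [RRule.RR], c, d, f, by simp [hl], Or.inl rfl, Or.inr rfl, hc, hd, hf⟩
        · exact absurd (hhead RRule.RR (by simp [hl])) (by decide)
      · exact absurd (hhead RRule.RI (by simp [hl])) (by decide)
    | RC =>
      rcases ha with rfl | rfl
      · rcases hb with rfl | rfl
        · refine ⟨[], [], RRule.RC :: c, d, f, by simp [hl], Or.inl rfl, Or.inl rfl, ?_, hd, hf⟩
          intro y hy
          rcases List.mem_cons.mp hy with rfl | hy
          · rfl
          · exact hc y hy
        · exact absurd (hhead RRule.RR (by simp [hl])) (by decide)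
      · exact absurd (hhead RRule.RI (by simp [hl])) (by decide)
    | REB =>
      rcases ha with rfl | rfl
      · rcases hb with rfl | rfl
        · cases c with
          | nil =>
            rcases hd with rfl | rfl
            · exact ⟨[], [], [], [RRule.REB], f, by simp [hl], Or.inl rfl, Or.inl rfl,
                by simp, Or.inr rfl, hf⟩
            · exact absurd (hhead RRule.REB (by simp [hl])) (by decide)
          | cons y c' =>
            have hy := hcRC y c' rfl
            subst hy
            exact absurd (hhead RRule.RC (by simp [hl])) (by decide)
        · exact absurd (hhead RRule.RR (by simp [hl])) (by decide)
      · exact absurd (hhead RRule.RI (by simp [hl])) (by decide)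
    | REF =>
      rcases ha with rfl | rfl
      · rcases hb with rfl | rfl
        · cases c with
          | nil =>
            rcases hd with rfl | rfl
            · rcases hf with rfl | rfl
              · exact ⟨[], [], [], [], [RRule.REF], by simp [hl], Or.inl rfl, Or.inl rfl,
                  by simp, Or.inl rfl, Or.inr rfl⟩
              · exact absurd (hhead RRule.REF (by simp [hl])) (by decide)
            · exact absurd (hhead RRule.REB (by simp [hl])) (by decide)
          | cons y c' =>
            have hy := hcRC y c' rfl
            subst hy
            exact absurd (hhead RRule.RC (by simp [hl])) (by decide)
        · exact absurd (hhead RRule.RR (by simp [hl])) (by decide)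
      · exact absurd (hhead RRule.RI (by simp [hl])) (by decide)

/-- within a single u-segment, the sequence of rules executed by a
non-root process u belongs to (R_I + ε)(R_R + ε)R_C*(R_EB + ε)(R_EF + ε). -/
theorem stmt8 (N : Network V) (e : ℕ → Config V) (he : IsExec N e)
    (u : V) (hu : u ≠ N.r) (s : ℕ) (t : ℕ∞) (hseg : IsSegment N e u s t)
    (m : ℕ) (τ : Fin m → ℕ) (ρ : Fin m → RRule)
    (hmono : StrictMono τ)
    (hin : ∀ i : Fin m, s ≤ τ i ∧ (τ i : ℕ∞) < t)
    (hexec : ∀ i : Fin m, ExecRule N (e (τ i)) (e (τ i + 1)) u (ρ i)) :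
    InRSPLang (List.ofFn ρ) := by
  apply lang_of_chain
  rw [show List.Chain' rrel (List.ofFn ρ) ↔ List.IsChain rrel (List.ofFn ρ) from Iff.rfl,
    List.isChain_iff_getElem]
  intro i hi
  rw [List.getElem_ofFn, List.getElem_ofFn]
  have hlen : (List.ofFn ρ).length = m := List.length_ofFn (f := ρ)
  set i1 : Fin m := Fin.cast hlen ⟨i, by omega⟩ with hi1
  set i2 : Fin m := Fin.cast hlen ⟨i + 1, by omega⟩ with hi2
  have hlt : i1 < i2 := by
    rw [Fin.lt_def]
    simp [hi1, hi2]
  have hτ : τ i1 < τ i2 := hmono hlt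
  exact exec_rrel N e he u s t hseg (τ i2 - τ i1) (τ i1) (τ i2) (ρ i1) (ρ i2) le_rfl
    (hin i1).1 hτ (hin i2).2 (hexec i1) (hexec i2)
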